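/- Top-eigenspace closeness lemma: Let W be a finite-dimensional complex inner product space, K := Z⊗H + Z⊗H' + X⊗H − X⊗H' on ℂ² ⊗ ℂ², and let Ψ ∈ (ℂ² ⊗ ℂ²) ⊗ W be a unit vector with Re⟨Ψ, (K ⊗ I) Ψ⟩ ≥ 2√2 − δ for some 0 ≤ δ < 2√2. Write Ψ = |Φ+⟩ ⊗ w₊ + |Φ−⟩ ⊗ w₋ + |Ψ+⟩ ⊗ u₊ + |Ψ−⟩ ⊗ u₋ in the Bell basis. Then ‖w₊‖² ≥ 1 − δ/(2√2), and with junk := w₊/‖w₊‖ one has ‖Ψ − |Φ+⟩ ⊗ junk‖ ≤ √(δ/√2). -/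

import Mathlib

set_option maxHeartbeats 1000000
set_option synthInstance.maxHeartbeats 400000
set_option synthInstance.maxSize 2048

noncomputable section

open scoped TensorProduct
open Module

/-! ## The canonical inner product space structure on tensor products -/

section TensorInner

variable (E F : Type*) [NormedAddCommGroup E] [InnerProductSpace ℂ E] [FiniteDimensional ℂ E]
  [NormedAddCommGroup F] [InnerProductSpace ℂ F] [FiniteDimensional ℂ F]

/-- Coordinate representation of `E ⊗[ℂ] F` with respect to the tensor product of
orthonormal bases of `E` and `F`. -/
def tensorRepr : (E ⊗[ℂ] F) ≃ₗ[ℂ]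
    EuclideanSpace ℂ (Fin (finrank ℂ E) × Fin (finrank ℂ F)) :=
  (((stdOrthonormalBasis ℂ E).toBasis.tensorProduct
      (stdOrthonormalBasis ℂ F).toBasis).equivFun).trans
    (WithLp.linearEquiv 2 ℂ ((Fin (finrank ℂ E) × Fin (finrank ℂ F)) → ℂ)).symm

/-- The canonical inner product on the tensor product of two finite-dimensional complex
inner product spaces; it satisfies `⟪a ⊗ b, c ⊗ d⟫ = ⟪a, c⟫ * ⟪b, d⟫`. -/
def tensorCore : InnerProductSpace.Core ℂ (E ⊗[ℂ] F) where
  inner x y := inner ℂ (tensorRepr E F x) (tensorRepr E F y)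
  conj_inner_symm x y := inner_conj_symm (𝕜 := ℂ) (tensorRepr E F x) (tensorRepr E F y)
  re_inner_nonneg x := inner_self_nonneg (𝕜 := ℂ) (x := tensorRepr E F x)
  add_left x y z := by simp [map_add, inner_add_left]
  smul_left x y r := by simp [map_smul, inner_smul_left, mul_comm]
  definite x h := by
    have h0 : tensorRepr E F x = 0 := inner_self_eq_zero.mp h
    simpa using (LinearEquiv.map_eq_zero_iff _).mp h0

noncomputable instance tensorNormedAddCommGroup : NormedAddCommGroup (E ⊗[ℂ] F) :=
  (tensorCore E F).toNormedAddCommGroup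

noncomputable instance tensorInnerProductSpace : InnerProductSpace ℂ (E ⊗[ℂ] F) :=
  InnerProductSpace.ofCore (tensorCore E F).toCore

end TensorInner

notation "⟪" x ", " y "⟫" => (inner (𝕜 := ℂ) x y)

/-! ## Qubits, standard states and gates -/

/-- The qubit space `ℂ²`. -/
abbrev Qubit := EuclideanSpace ℂ (Fin 2)

/-- The standard basis state `|0⟩`. -/
def ket0 : Qubit := EuclideanSpace.single 0 1

/-- The standard basis state `|1⟩`. -/
def ket1 : Qubit := EuclideanSpace.single 1 1

/-- The rank-one operator `|a⟩⟨b|` on an inner product space. -/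
def ketbra {H : Type*} [NormedAddCommGroup H] [InnerProductSpace ℂ H] (a b : H) :
    H →ₗ[ℂ] H where
  toFun v := (inner ℂ b v : ℂ) • a
  map_add' u v := by simp [inner_add_right, add_smul]
  map_smul' c v := by simp [inner_smul_right, smul_smul]

/-- The projector `|0⟩⟨0|`. -/
def proj0 : Qubit →ₗ[ℂ] Qubit := ketbra ket0 ket0

/-- The projector `|1⟩⟨1|`. -/
def proj1 : Qubit →ₗ[ℂ] Qubit := ketbra ket1 ket1

/-- The Pauli operator `σ_z = |0⟩⟨0| - |1⟩⟨1|`. -/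
def pauliZ : Qubit →ₗ[ℂ] Qubit := ketbra ket0 ket0 - ketbra ket1 ket1

/-- The Pauli operator `σ_x = |0⟩⟨1| + |1⟩⟨0|`. -/
def pauliX : Qubit →ₗ[ℂ] Qubit := ketbra ket0 ket1 + ketbra ket1 ket0

/-- The Hadamard gate `H = (Z + X)/√2`. -/
def Hadamard : Qubit →ₗ[ℂ] Qubit := ((Real.sqrt 2 : ℂ))⁻¹ • (pauliZ + pauliX)

/-- The reflected Hadamard gate `H' = (Z - X)/√2`. -/
def HadamardPrime : Qubit →ₗ[ℂ] Qubit := ((Real.sqrt 2 : ℂ))⁻¹ • (pauliZ - pauliX)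

/-- The rotation `R = sin(π/8)·X + cos(π/8)·Z`, satisfying `RZR† = H`, `RXR† = H'`. -/
def Rotation : Qubit →ₗ[ℂ] Qubit :=
  (Real.sin (Real.pi / 8) : ℂ) • pauliX + (Real.cos (Real.pi / 8) : ℂ) • pauliZ

/-! ## Bell states -/

/-- The Bell state `|Φ+⟩ = (|00⟩ + |11⟩)/√2`. -/
def bellPhiPlus : Qubit ⊗[ℂ] Qubit :=
  ((Real.sqrt 2 : ℂ))⁻¹ • (ket0 ⊗ₜ[ℂ] ket0 + ket1 ⊗ₜ[ℂ] ket1)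

/-- The Bell state `|Φ−⟩ = (|00⟩ − |11⟩)/√2`. -/
def bellPhiMinus : Qubit ⊗[ℂ] Qubit :=
  ((Real.sqrt 2 : ℂ))⁻¹ • (ket0 ⊗ₜ[ℂ] ket0 - ket1 ⊗ₜ[ℂ] ket1)

/-- The Bell state `|Ψ+⟩ = (|01⟩ + |10⟩)/√2`. -/
def bellPsiPlus : Qubit ⊗[ℂ] Qubit :=
  ((Real.sqrt 2 : ℂ))⁻¹ • (ket0 ⊗ₜ[ℂ] ket1 + ket1 ⊗ₜ[ℂ] ket0)

/-- The Bell state `|Ψ−⟩ = (|01⟩ − |10⟩)/√2`. -/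
def bellPsiMinus : Qubit ⊗[ℂ] Qubit :=
  ((Real.sqrt 2 : ℂ))⁻¹ • (ket0 ⊗ₜ[ℂ] ket1 - ket1 ⊗ₜ[ℂ] ket0)

/-! ## Binary observables and CHSH strategies -/

/-- A binary observable: a symmetric (self-adjoint) involution. -/
structure IsBinaryObservable {H : Type*} [NormedAddCommGroup H] [InnerProductSpace ℂ H]
    (A : H →ₗ[ℂ] H) : Prop where
  symm : A.IsSymmetric
  sq_one : A ∘ₗ A = LinearMap.id

variable {H_A H_B : Type*}
  [NormedAddCommGroup H_A] [InnerProductSpace ℂ H_A] [FiniteDimensional ℂ H_A]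
  [NormedAddCommGroup H_B] [InnerProductSpace ℂ H_B] [FiniteDimensional ℂ H_B]

/-- A CHSH strategy: a shared unit state together with two binary observables per party. -/
structure CHSHStrategy (H_A H_B : Type*)
    [NormedAddCommGroup H_A] [InnerProductSpace ℂ H_A] [FiniteDimensional ℂ H_A]
    [NormedAddCommGroup H_B] [InnerProductSpace ℂ H_B] [FiniteDimensional ℂ H_B] where
  psi : H_A ⊗[ℂ] H_B
  psi_norm : ‖psi‖ = 1
  A0 : H_A →ₗ[ℂ] H_A
  A1 : H_A →ₗ[ℂ] H_A
  B0 : H_B →ₗ[ℂ] H_B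
  B1 : H_B →ₗ[ℂ] H_B
  A0_bin : IsBinaryObservable A0
  A1_bin : IsBinaryObservable A1
  B0_bin : IsBinaryObservable B0
  B1_bin : IsBinaryObservable B1

/-- The general CHSH operator `A0⊗B0 + A0⊗B1 + A1⊗B0 − A1⊗B1`. -/
def CHSH_op (A0 A1 : H_A →ₗ[ℂ] H_A) (B0 B1 : H_B →ₗ[ℂ] H_B) :
    H_A ⊗[ℂ] H_B →ₗ[ℂ] H_A ⊗[ℂ] H_B :=
  TensorProduct.map A0 B0 + TensorProduct.map A0 B1 +
    TensorProduct.map A1 B0 - TensorProduct.map A1 B1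

/-- The CHSH bias `β(S) = Re⟨ψ, CHSH ψ⟩` of a strategy. -/
def chshBias (S : CHSHStrategy H_A H_B) : ℝ :=
  (⟪S.psi, (CHSH_op S.A0 S.A1 S.B0 S.B1) S.psi⟫).re

/-- Alice's observable acting on the shared state. -/
def applyAlice (A : H_A →ₗ[ℂ] H_A) : H_A ⊗[ℂ] H_B →ₗ[ℂ] H_A ⊗[ℂ] H_B :=
  TensorProduct.map A LinearMap.id

/-- Bob's observable acting on the shared state. -/
def applyBob (B : H_B →ₗ[ℂ] H_B) : H_A ⊗[ℂ] H_B →ₗ[ℂ] H_A ⊗[ℂ] H_B :=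
  TensorProduct.map LinearMap.id B

/-! ## The extraction circuit -/

variable {H : Type*} [NormedAddCommGroup H] [InnerProductSpace ℂ H] [FiniteDimensional ℂ H]

/-- Ancilla embedding `v ↦ |aux⟩ ⊗ v`. -/
def embed (aux : Qubit) : H →ₗ[ℂ] (Qubit ⊗[ℂ] H) :=
  (TensorProduct.mk ℂ Qubit H) aux

/-- Controlled gate `|0⟩⟨0| ⊗ I + |1⟩⟨1| ⊗ A`. -/
def controlGate (A : H →ₗ[ℂ] H) : (Qubit ⊗[ℂ] H) →ₗ[ℂ] (Qubit ⊗[ℂ] H) :=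
  TensorProduct.map proj0 (LinearMap.id : H →ₗ[ℂ] H) + TensorProduct.map proj1 A

/-- The extraction unitary `U_A = C_{A1}(H ⊗ I)C_{A0}(H ⊗ I)`. -/
def unitaryUA (A0 A1 : H →ₗ[ℂ] H) : (Qubit ⊗[ℂ] H) →ₗ[ℂ] (Qubit ⊗[ℂ] H) :=
  (controlGate A1) ∘ₗ (TensorProduct.map Hadamard LinearMap.id) ∘ₗ
    (controlGate A0) ∘ₗ (TensorProduct.map Hadamard LinearMap.id)

/-- Alice's extractor `V_A = U_A (|0⟩ ⊗ ·)`. -/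
def VA (A0 A1 : H →ₗ[ℂ] H) : H →ₗ[ℂ] (Qubit ⊗[ℂ] H) :=
  (unitaryUA A0 A1) ∘ₗ (embed ket0)

/-- Bob's rotated extraction unitary `U_B = (R ⊗ I) U_A(B0,B1) (R† ⊗ I)`. -/
def unitaryUB (B0 B1 : H →ₗ[ℂ] H) : (Qubit ⊗[ℂ] H) →ₗ[ℂ] (Qubit ⊗[ℂ] H) :=
  (TensorProduct.map Rotation LinearMap.id) ∘ₗ (unitaryUA B0 B1) ∘ₗ
    (TensorProduct.map (LinearMap.adjoint Rotation) LinearMap.id)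

/-- Bob's rotated ancilla `|aux⟩ = R|0⟩`. -/
def auxState : Qubit := Rotation ket0

/-- Bob's extractor `V_B = U_B (|aux⟩ ⊗ ·)`. -/
def VB (B0 B1 : H →ₗ[ℂ] H) : H →ₗ[ℂ] (Qubit ⊗[ℂ] H) :=
  (unitaryUB B0 B1) ∘ₗ (embed auxState)

/-! ## Tensor regrouping -/

/-- The canonical regrouping isomorphism
`(ℂ² ⊗ H_A) ⊗ (ℂ² ⊗ H_B) ≃ (ℂ² ⊗ ℂ²) ⊗ (H_A ⊗ H_B)`. -/
def regSwap (H_A H_B : Type*)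
    [NormedAddCommGroup H_A] [InnerProductSpace ℂ H_A] [FiniteDimensional ℂ H_A]
    [NormedAddCommGroup H_B] [InnerProductSpace ℂ H_B] [FiniteDimensional ℂ H_B] :
    ((Qubit ⊗[ℂ] H_A) ⊗[ℂ] (Qubit ⊗[ℂ] H_B)) ≃ₗ[ℂ]
      ((Qubit ⊗[ℂ] Qubit) ⊗[ℂ] (H_A ⊗[ℂ] H_B)) :=
  (TensorProduct.assoc ℂ Qubit H_A (Qubit ⊗[ℂ] H_B)).trans <|
    (TensorProduct.congr (LinearEquiv.refl ℂ Qubit)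
      (((TensorProduct.assoc ℂ H_A Qubit H_B).symm.trans
        (TensorProduct.congr (TensorProduct.comm ℂ H_A Qubit) (LinearEquiv.refl ℂ H_B))).trans
          (TensorProduct.assoc ℂ Qubit H_A H_B))).trans
      (TensorProduct.assoc ℂ Qubit Qubit (H_A ⊗[ℂ] H_B)).symm

/-! ## The canonical two-qubit CHSH operator and the constants -/

/-- The canonical two-qubit CHSH operator `K = Z⊗H + Z⊗H' + X⊗H − X⊗H'`. -/
def K : (Qubit ⊗[ℂ] Qubit) →ₗ[ℂ] (Qubit ⊗[ℂ] Qubit) :=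
  TensorProduct.map pauliZ Hadamard + TensorProduct.map pauliZ HadamardPrime +
    TensorProduct.map pauliX Hadamard - TensorProduct.map pauliX HadamardPrime

/-- The constant `c = 128√2` in the anticommutator bounds. -/
def cConst : ℝ := 128 * Real.sqrt 2

/-- The error function `δ(ε) = ε + 4√(cε)`. -/
def delta (ε : ℝ) : ℝ := ε + 4 * Real.sqrt (cConst * ε)

end
open scoped TensorProduct
open Module

section
variable (E F : Type*) [NormedAddCommGroup E] [InnerProductSpace ℂ E] [FiniteDimensional ℂ E]
  [NormedAddCommGroup F] [InnerProductSpace ℂ F] [FiniteDimensional ℂ F]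

lemma inner_tmul (a c : E) (b d : F) :
    ⟪a ⊗ₜ[ℂ] b, c ⊗ₜ[ℂ] d⟫ = ⟪a, c⟫ * ⟪b, d⟫ :=
  TensorProduct.inner_tmul ℂ a c b d

lemma inner_tmul_ours (a c : E) (b d : F) :
    @inner ℂ _ (tensorInnerProductSpace E F).toInner (a ⊗ₜ[ℂ] b) (c ⊗ₜ[ℂ] d) = ⟪a, c⟫ * ⟪b, d⟫ := by
  have key : ∀ x y : E ⊗[ℂ] F, @inner ℂ _ (tensorInnerProductSpace E F).toInner x y =
      ⟪tensorRepr E F x, tensorRepr E F y⟫ := fun _ _ => rfl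
  rw [key]
  have hrepr : ∀ (x : E) (y : F) (i : Fin (finrank ℂ E)) (j : Fin (finrank ℂ F)),
      tensorRepr E F (x ⊗ₜ[ℂ] y) (i, j) =
        (stdOrthonormalBasis ℂ E).repr x i * (stdOrthonormalBasis ℂ F).repr y j := by
    intro x y i j
    simp [tensorRepr, Basis.equivFun_apply, Basis.tensorProduct_repr_tmul_apply,
      OrthonormalBasis.coe_toBasis_repr_apply, mul_comm]
  rw [show (⟪a,c⟫ : ℂ) = ⟪(stdOrthonormalBasis ℂ E).repr a, (stdOrthonormalBasis ℂ E).repr c⟫ from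
    ((stdOrthonormalBasis ℂ E).repr.inner_map_map a c).symm]
  rw [show (⟪b,d⟫ : ℂ) = ⟪(stdOrthonormalBasis ℂ F).repr b, (stdOrthonormalBasis ℂ F).repr d⟫ from
    ((stdOrthonormalBasis ℂ F).repr.inner_map_map b d).symm]
  simp only [PiLp.inner_apply, RCLike.inner_apply, hrepr]
  rw [Fintype.sum_prod_type]
  rw [Finset.sum_mul_sum]
  refine Finset.sum_congr rfl fun i _ => Finset.sum_congr rfl fun j _ => ?_
  simp only [map_mul]
  ring

lemma tinner_eq (x y : E ⊗[ℂ] F) :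
    ⟪x, y⟫ = @inner ℂ _ (tensorInnerProductSpace E F).toInner x y := by
  induction x using TensorProduct.induction_on with
  | zero => simp [TensorProduct.inner_def]
  | tmul a b =>
    induction y using TensorProduct.induction_on with
    | zero => simp [TensorProduct.inner_def]
    | tmul c d => rw [TensorProduct.inner_tmul, inner_tmul_ours]
    | add y1 y2 h1 h2 =>
      simp only [TensorProduct.inner_def, map_add] at h1 h2 ⊢
      rw [h1, h2, inner_add_right]
  | add x1 x2 h1 h2 =>
    simp only [TensorProduct.inner_def, map_add, LinearMap.add_apply] at h1 h2 ⊢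
    rw [h1, h2, inner_add_left]
end

section
@[simp] lemma inner_k00 : ⟪ket0, ket0⟫ = 1 := by
  simp [ket0, EuclideanSpace.inner_single_left, EuclideanSpace.single_apply]
@[simp] lemma inner_k11 : ⟪ket1, ket1⟫ = 1 := by
  simp [ket1, EuclideanSpace.inner_single_left, EuclideanSpace.single_apply]
@[simp] lemma inner_k01 : ⟪ket0, ket1⟫ = 0 := by
  simp [ket0, ket1, EuclideanSpace.inner_single_left, EuclideanSpace.single_apply]
@[simp] lemma inner_k10 : ⟪ket1, ket0⟫ = 0 := by
  simp [ket0, ket1, EuclideanSpace.inner_single_left, EuclideanSpace.single_apply]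

lemma ketbra_apply {H : Type*} [NormedAddCommGroup H] [InnerProductSpace ℂ H] (a b v : H) :
    ketbra a b v = ⟪b, v⟫ • a := rfl

@[simp] lemma pauliZ_k0 : pauliZ ket0 = ket0 := by
  simp only [pauliZ, LinearMap.sub_apply, ketbra_apply, inner_k00, inner_k10, inner_k01, inner_k11, one_smul, zero_smul, sub_zero, zero_sub]
@[simp] lemma pauliZ_k1 : pauliZ ket1 = -ket1 := by
  simp only [pauliZ, LinearMap.sub_apply, ketbra_apply, inner_k00, inner_k10, inner_k01, inner_k11, one_smul, zero_smul, sub_zero, zero_sub]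
@[simp] lemma pauliX_k0 : pauliX ket0 = ket1 := by
  simp only [pauliX, LinearMap.add_apply, ketbra_apply, inner_k00, inner_k10, inner_k01, inner_k11, one_smul, zero_smul, add_zero, zero_add]
@[simp] lemma pauliX_k1 : pauliX ket1 = ket0 := by
  simp only [pauliX, LinearMap.add_apply, ketbra_apply, inner_k00, inner_k10, inner_k01, inner_k11, one_smul, zero_smul, add_zero, zero_add]

lemma hs : (Real.sqrt 2 : ℂ) * (Real.sqrt 2 : ℂ) = 2 := by
  rw [← Complex.ofReal_mul, Real.mul_self_sqrt (by norm_num)]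
  norm_num

lemma hs0 : (Real.sqrt 2 : ℂ) ≠ 0 := by
  simp [Real.sqrt_eq_zero']

lemma K_tmul (a b : Qubit) : K (a ⊗ₜ[ℂ] b) =
    (Real.sqrt 2 : ℂ) • (pauliZ a ⊗ₜ[ℂ] pauliZ b + pauliX a ⊗ₜ[ℂ] pauliX b) := by
  have h1 : Hadamard b + HadamardPrime b = (Real.sqrt 2 : ℂ) • pauliZ b := by
    simp only [Hadamard, HadamardPrime, LinearMap.smul_apply, LinearMap.add_apply,
      LinearMap.sub_apply]
    match_scalars
    · field_simp
      rw [sq, hs]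
      norm_num
    · ring
  have h2 : Hadamard b - HadamardPrime b = (Real.sqrt 2 : ℂ) • pauliX b := by
    simp only [Hadamard, HadamardPrime, LinearMap.smul_apply, LinearMap.add_apply,
      LinearMap.sub_apply]
    match_scalars
    · ring
    · field_simp
      rw [sq, hs]
      norm_num
  simp only [K, LinearMap.add_apply, LinearMap.sub_apply, TensorProduct.map_tmul]
  rw [show ∀ x1 x2 y1 y2 : Qubit ⊗[ℂ] Qubit, x1 + x2 + y1 - y2 = (x1 + x2) + (y1 - y2)
    from fun _ _ _ _ => by abel]
  rw [← TensorProduct.tmul_add, ← TensorProduct.tmul_sub, h1, h2]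
  simp [TensorProduct.tmul_smul, smul_add]
  rfl

lemma K_phiP : K bellPhiPlus = ((2 * Real.sqrt 2 : ℝ) : ℂ) • bellPhiPlus := by
  simp only [bellPhiPlus, map_smul, map_add, K_tmul, pauliZ_k0, pauliZ_k1, pauliX_k0, pauliX_k1,
    TensorProduct.neg_tmul, TensorProduct.tmul_neg, neg_neg]
  match_scalars <;> ring

lemma K_phiM : K bellPhiMinus = 0 := by
  simp only [bellPhiMinus, map_smul, map_sub, K_tmul, pauliZ_k0, pauliZ_k1, pauliX_k0, pauliX_k1,
    TensorProduct.neg_tmul, TensorProduct.tmul_neg, neg_neg]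
  match_scalars <;> ring

lemma K_psiP : K bellPsiPlus = 0 := by
  simp only [bellPsiPlus, map_smul, map_add, K_tmul, pauliZ_k0, pauliZ_k1, pauliX_k0, pauliX_k1,
    TensorProduct.neg_tmul, TensorProduct.tmul_neg, neg_neg]
  match_scalars <;> ring

lemma K_psiM : K bellPsiMinus = -(((2 * Real.sqrt 2 : ℝ) : ℂ) • bellPsiMinus) := by
  simp only [bellPsiMinus, map_smul, map_sub, K_tmul, pauliZ_k0, pauliZ_k1, pauliX_k0, pauliX_k1,
    TensorProduct.neg_tmul, TensorProduct.tmul_neg, neg_neg]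
  match_scalars <;> ring
end

section
variable {E F : Type*} [NormedAddCommGroup E] [InnerProductSpace ℂ E] [FiniteDimensional ℂ E]
  [NormedAddCommGroup F] [InnerProductSpace ℂ F] [FiniteDimensional ℂ F]

lemma tinner_add_left (x y z : E ⊗[ℂ] F) : ⟪x + y, z⟫ = ⟪x, z⟫ + ⟪y, z⟫ :=
  by simp only [tinner_eq]; exact inner_add_left (𝕜 := ℂ) x y z
lemma tinner_add_right (x y z : E ⊗[ℂ] F) : ⟪x, y + z⟫ = ⟪x, y⟫ + ⟪x, z⟫ :=
  by simp only [tinner_eq]; exact inner_add_right (𝕜 := ℂ) x y z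
lemma tinner_sub_left (x y z : E ⊗[ℂ] F) : ⟪x - y, z⟫ = ⟪x, z⟫ - ⟪y, z⟫ :=
  by simp only [tinner_eq]; exact inner_sub_left (𝕜 := ℂ) x y z
lemma tinner_sub_right (x y z : E ⊗[ℂ] F) : ⟪x, y - z⟫ = ⟪x, y⟫ - ⟪x, z⟫ :=
  by simp only [tinner_eq]; exact inner_sub_right (𝕜 := ℂ) x y z
lemma tinner_smul_left (c : ℂ) (x y : E ⊗[ℂ] F) : ⟪c • x, y⟫ = (starRingEnd ℂ) c * ⟪x, y⟫ :=
  by simp only [tinner_eq]; exact inner_smul_left (𝕜 := ℂ) x y c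
lemma tinner_smul_right (c : ℂ) (x y : E ⊗[ℂ] F) : ⟪x, c • y⟫ = c * ⟪x, y⟫ :=
  by simp only [tinner_eq]; exact inner_smul_right (𝕜 := ℂ) x y c
lemma tinner_neg_right (x y : E ⊗[ℂ] F) : ⟪x, -y⟫ = -⟪x, y⟫ :=
  by simp only [tinner_eq]; exact inner_neg_right (𝕜 := ℂ) x y
lemma tinner_self (x : E ⊗[ℂ] F) : (⟪x, x⟫).re = ‖x‖ ^ 2 :=
  by simp only [tinner_eq]; exact inner_self_eq_norm_sq (𝕜 := ℂ) x

end


lemma cinner_self {H : Type*} [NormedAddCommGroup H] [InnerProductSpace ℂ H] (x : H) :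
    (⟪x, x⟫).re = ‖x‖^2 := inner_self_eq_norm_sq (𝕜 := ℂ) x

lemma cinner_self' {H : Type*} [NormedAddCommGroup H] [InnerProductSpace ℂ H] (x : H) :
    ⟪x, x⟫ = ((‖x‖^2 : ℝ) : ℂ) := by
  rw [inner_self_eq_norm_sq_to_K]; norm_cast

section

@[simp] lemma bPPPP : ⟪bellPhiPlus, bellPhiPlus⟫ = 1 := by
  simp only [bellPhiPlus, bellPhiMinus, bellPsiPlus, bellPsiMinus,
    tinner_smul_left, tinner_smul_right, tinner_add_left, tinner_add_right,
    tinner_sub_left, tinner_sub_right, inner_tmul, inner_k00, inner_k01, inner_k10, inner_k11,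
    mul_one, mul_zero, one_mul, zero_mul, add_zero, zero_add, sub_zero, zero_sub, sub_self,
    map_inv₀, Complex.conj_ofReal]
  try field_simp
  try rw [sq, hs]
  try norm_num

@[simp] lemma bPPPM : ⟪bellPhiPlus, bellPhiMinus⟫ = 0 := by
  simp only [bellPhiPlus, bellPhiMinus, bellPsiPlus, bellPsiMinus,
    tinner_smul_left, tinner_smul_right, tinner_add_left, tinner_add_right,
    tinner_sub_left, tinner_sub_right, inner_tmul, inner_k00, inner_k01, inner_k10, inner_k11,
    mul_one, mul_zero, one_mul, zero_mul, add_zero, zero_add, sub_zero, zero_sub, sub_self,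
    map_inv₀, Complex.conj_ofReal]
  try field_simp
  try rw [hs]
  try norm_num

@[simp] lemma bPPSP : ⟪bellPhiPlus, bellPsiPlus⟫ = 0 := by
  simp only [bellPhiPlus, bellPhiMinus, bellPsiPlus, bellPsiMinus,
    tinner_smul_left, tinner_smul_right, tinner_add_left, tinner_add_right,
    tinner_sub_left, tinner_sub_right, inner_tmul, inner_k00, inner_k01, inner_k10, inner_k11,
    mul_one, mul_zero, one_mul, zero_mul, add_zero, zero_add, sub_zero, zero_sub, sub_self,
    map_inv₀, Complex.conj_ofReal]
  try field_simp
  try rw [hs]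
  try norm_num

@[simp] lemma bPPSM : ⟪bellPhiPlus, bellPsiMinus⟫ = 0 := by
  simp only [bellPhiPlus, bellPhiMinus, bellPsiPlus, bellPsiMinus,
    tinner_smul_left, tinner_smul_right, tinner_add_left, tinner_add_right,
    tinner_sub_left, tinner_sub_right, inner_tmul, inner_k00, inner_k01, inner_k10, inner_k11,
    mul_one, mul_zero, one_mul, zero_mul, add_zero, zero_add, sub_zero, zero_sub, sub_self,
    map_inv₀, Complex.conj_ofReal]
  try field_simp
  try rw [hs]
  try norm_num

@[simp] lemma bPMPP : ⟪bellPhiMinus, bellPhiPlus⟫ = 0 := by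
  simp only [bellPhiPlus, bellPhiMinus, bellPsiPlus, bellPsiMinus,
    tinner_smul_left, tinner_smul_right, tinner_add_left, tinner_add_right,
    tinner_sub_left, tinner_sub_right, inner_tmul, inner_k00, inner_k01, inner_k10, inner_k11,
    mul_one, mul_zero, one_mul, zero_mul, add_zero, zero_add, sub_zero, zero_sub, sub_self,
    map_inv₀, Complex.conj_ofReal]
  try field_simp
  try rw [hs]
  try norm_num

@[simp] lemma bPMPM : ⟪bellPhiMinus, bellPhiMinus⟫ = 1 := by
  simp only [bellPhiPlus, bellPhiMinus, bellPsiPlus, bellPsiMinus,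
    tinner_smul_left, tinner_smul_right, tinner_add_left, tinner_add_right,
    tinner_sub_left, tinner_sub_right, inner_tmul, inner_k00, inner_k01, inner_k10, inner_k11,
    mul_one, mul_zero, one_mul, zero_mul, add_zero, zero_add, sub_zero, zero_sub, sub_self,
    map_inv₀, Complex.conj_ofReal]
  try field_simp
  try rw [sq, hs]
  try norm_num

@[simp] lemma bPMSP : ⟪bellPhiMinus, bellPsiPlus⟫ = 0 := by
  simp only [bellPhiPlus, bellPhiMinus, bellPsiPlus, bellPsiMinus,
    tinner_smul_left, tinner_smul_right, tinner_add_left, tinner_add_right,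
    tinner_sub_left, tinner_sub_right, inner_tmul, inner_k00, inner_k01, inner_k10, inner_k11,
    mul_one, mul_zero, one_mul, zero_mul, add_zero, zero_add, sub_zero, zero_sub, sub_self,
    map_inv₀, Complex.conj_ofReal]
  try field_simp
  try rw [hs]
  try norm_num

@[simp] lemma bPMSM : ⟪bellPhiMinus, bellPsiMinus⟫ = 0 := by
  simp only [bellPhiPlus, bellPhiMinus, bellPsiPlus, bellPsiMinus,
    tinner_smul_left, tinner_smul_right, tinner_add_left, tinner_add_right,
    tinner_sub_left, tinner_sub_right, inner_tmul, inner_k00, inner_k01, inner_k10, inner_k11,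
    mul_one, mul_zero, one_mul, zero_mul, add_zero, zero_add, sub_zero, zero_sub, sub_self,
    map_inv₀, Complex.conj_ofReal]
  try field_simp
  try rw [hs]
  try norm_num

@[simp] lemma bSPPP : ⟪bellPsiPlus, bellPhiPlus⟫ = 0 := by
  simp only [bellPhiPlus, bellPhiMinus, bellPsiPlus, bellPsiMinus,
    tinner_smul_left, tinner_smul_right, tinner_add_left, tinner_add_right,
    tinner_sub_left, tinner_sub_right, inner_tmul, inner_k00, inner_k01, inner_k10, inner_k11,
    mul_one, mul_zero, one_mul, zero_mul, add_zero, zero_add, sub_zero, zero_sub, sub_self,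
    map_inv₀, Complex.conj_ofReal]
  try field_simp
  try rw [hs]
  try norm_num

@[simp] lemma bSPPM : ⟪bellPsiPlus, bellPhiMinus⟫ = 0 := by
  simp only [bellPhiPlus, bellPhiMinus, bellPsiPlus, bellPsiMinus,
    tinner_smul_left, tinner_smul_right, tinner_add_left, tinner_add_right,
    tinner_sub_left, tinner_sub_right, inner_tmul, inner_k00, inner_k01, inner_k10, inner_k11,
    mul_one, mul_zero, one_mul, zero_mul, add_zero, zero_add, sub_zero, zero_sub, sub_self,
    map_inv₀, Complex.conj_ofReal]
  try field_simp
  try rw [hs]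
  try norm_num

@[simp] lemma bSPSP : ⟪bellPsiPlus, bellPsiPlus⟫ = 1 := by
  simp only [bellPhiPlus, bellPhiMinus, bellPsiPlus, bellPsiMinus,
    tinner_smul_left, tinner_smul_right, tinner_add_left, tinner_add_right,
    tinner_sub_left, tinner_sub_right, inner_tmul, inner_k00, inner_k01, inner_k10, inner_k11,
    mul_one, mul_zero, one_mul, zero_mul, add_zero, zero_add, sub_zero, zero_sub, sub_self,
    map_inv₀, Complex.conj_ofReal]
  try field_simp
  try rw [sq, hs]
  try norm_num

@[simp] lemma bSPSM : ⟪bellPsiPlus, bellPsiMinus⟫ = 0 := by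
  simp only [bellPhiPlus, bellPhiMinus, bellPsiPlus, bellPsiMinus,
    tinner_smul_left, tinner_smul_right, tinner_add_left, tinner_add_right,
    tinner_sub_left, tinner_sub_right, inner_tmul, inner_k00, inner_k01, inner_k10, inner_k11,
    mul_one, mul_zero, one_mul, zero_mul, add_zero, zero_add, sub_zero, zero_sub, sub_self,
    map_inv₀, Complex.conj_ofReal]
  try field_simp
  try rw [hs]
  try norm_num

@[simp] lemma bSMPP : ⟪bellPsiMinus, bellPhiPlus⟫ = 0 := by
  simp only [bellPhiPlus, bellPhiMinus, bellPsiPlus, bellPsiMinus,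
    tinner_smul_left, tinner_smul_right, tinner_add_left, tinner_add_right,
    tinner_sub_left, tinner_sub_right, inner_tmul, inner_k00, inner_k01, inner_k10, inner_k11,
    mul_one, mul_zero, one_mul, zero_mul, add_zero, zero_add, sub_zero, zero_sub, sub_self,
    map_inv₀, Complex.conj_ofReal]
  try field_simp
  try rw [hs]
  try norm_num

@[simp] lemma bSMPM : ⟪bellPsiMinus, bellPhiMinus⟫ = 0 := by
  simp only [bellPhiPlus, bellPhiMinus, bellPsiPlus, bellPsiMinus,
    tinner_smul_left, tinner_smul_right, tinner_add_left, tinner_add_right,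
    tinner_sub_left, tinner_sub_right, inner_tmul, inner_k00, inner_k01, inner_k10, inner_k11,
    mul_one, mul_zero, one_mul, zero_mul, add_zero, zero_add, sub_zero, zero_sub, sub_self,
    map_inv₀, Complex.conj_ofReal]
  try field_simp
  try rw [hs]
  try norm_num

@[simp] lemma bSMSP : ⟪bellPsiMinus, bellPsiPlus⟫ = 0 := by
  simp only [bellPhiPlus, bellPhiMinus, bellPsiPlus, bellPsiMinus,
    tinner_smul_left, tinner_smul_right, tinner_add_left, tinner_add_right,
    tinner_sub_left, tinner_sub_right, inner_tmul, inner_k00, inner_k01, inner_k10, inner_k11,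
    mul_one, mul_zero, one_mul, zero_mul, add_zero, zero_add, sub_zero, zero_sub, sub_self,
    map_inv₀, Complex.conj_ofReal]
  try field_simp
  try rw [hs]
  try norm_num

@[simp] lemma bSMSM : ⟪bellPsiMinus, bellPsiMinus⟫ = 1 := by
  simp only [bellPhiPlus, bellPhiMinus, bellPsiPlus, bellPsiMinus,
    tinner_smul_left, tinner_smul_right, tinner_add_left, tinner_add_right,
    tinner_sub_left, tinner_sub_right, inner_tmul, inner_k00, inner_k01, inner_k10, inner_k11,
    mul_one, mul_zero, one_mul, zero_mul, add_zero, zero_add, sub_zero, zero_sub, sub_self,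
    map_inv₀, Complex.conj_ofReal]
  try field_simp
  try rw [sq, hs]
  try norm_num

end


open scoped TensorProduct
open Module

set_option maxHeartbeats 4000000

/-- **Top-eigenspace closeness lemma.** -/
theorem top_eigenspace_closeness
    {W : Type*} [NormedAddCommGroup W] [InnerProductSpace ℂ W] [FiniteDimensional ℂ W]
    (δ : ℝ) (hδ0 : 0 ≤ δ) (hδ1 : δ < 2 * Real.sqrt 2)
    (Ψ : (Qubit ⊗[ℂ] Qubit) ⊗[ℂ] W) (hΨ : ‖Ψ‖ = 1)
    (wP wM uP uM : W)
    (hdecomp : Ψ = bellPhiPlus ⊗ₜ[ℂ] wP + bellPhiMinus ⊗ₜ[ℂ] wM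
        + bellPsiPlus ⊗ₜ[ℂ] uP + bellPsiMinus ⊗ₜ[ℂ] uM)
    (hexp : (⟪Ψ, (TensorProduct.map K (LinearMap.id : W →ₗ[ℂ] W)) Ψ⟫).re
        ≥ 2 * Real.sqrt 2 - δ) :
    ‖wP‖ ^ 2 ≥ 1 - δ / (2 * Real.sqrt 2) ∧
    ‖Ψ - bellPhiPlus ⊗ₜ[ℂ] (((‖wP‖ : ℂ))⁻¹ • wP)‖ ≤ Real.sqrt (δ / Real.sqrt 2) := by
  set s : ℝ := Real.sqrt 2 with hsdef
  have hspos : (0:ℝ) < s := Real.sqrt_pos.mpr (by norm_num)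
  have hs2 : s * s = 2 := Real.mul_self_sqrt (by norm_num)
  -- norm decomposition
  have hnorm : ‖wP‖^2 + ‖wM‖^2 + ‖uP‖^2 + ‖uM‖^2 = 1 := by
    have h0 : (⟪Ψ, Ψ⟫).re = 1 := by rw [tinner_self, hΨ]; norm_num
    rw [hdecomp] at h0
    simp only [tinner_add_left, tinner_add_right, inner_tmul,
      ← tinner_eq, bPPPP, bPPPM, bPPSP, bPPSM, bPMPP, bPMPM, bPMSP, bPMSM,
      bSPPP, bSPPM, bSPSP, bSPSM, bSMPP, bSMPM, bSMSP, bSMSM,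
      one_mul, zero_mul, add_zero, zero_add] at h0
    simpa [Complex.add_re, cinner_self, ← Complex.ofReal_pow, Complex.ofReal_re] using h0
  -- action of K ⊗ id
  have hK : (TensorProduct.map K (LinearMap.id : W →ₗ[ℂ] W)) Ψ
      = ((2 * s : ℝ) : ℂ) • (bellPhiPlus ⊗ₜ[ℂ] wP)
        - ((2 * s : ℝ) : ℂ) • (bellPsiMinus ⊗ₜ[ℂ] uM) := by
    rw [hdecomp]
    simp only [map_add, TensorProduct.map_tmul, LinearMap.id_coe, id_eq,
      K_phiP, K_phiM, K_psiP, K_psiM, TensorProduct.zero_tmul, add_zero,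
      TensorProduct.neg_tmul, ← TensorProduct.smul_tmul']
    rw [sub_eq_add_neg]
  have hexp2 : 2 * s * ‖wP‖^2 - 2 * s * ‖uM‖^2 ≥ 2 * s - δ := by
    have h1 : (⟪Ψ, (TensorProduct.map K (LinearMap.id : W →ₗ[ℂ] W)) Ψ⟫).re
        = 2 * s * ‖wP‖^2 - 2 * s * ‖uM‖^2 := by
      rw [hK]
      conv_lhs => rw [hdecomp]
      simp only [tinner_add_left, tinner_sub_right, tinner_smul_right, inner_tmul,
        ← tinner_eq, bPPPP, bPPPM, bPPSP, bPPSM, bPMPP, bPMPM, bPMSP, bPMSM,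
        bSPPP, bSPPM, bSPSP, bSPSM, bSMPP, bSMPM, bSMSP, bSMSM,
        one_mul, zero_mul, add_zero, zero_add, mul_zero, sub_zero, zero_sub]
      simp only [cinner_self']
      norm_cast
    rw [h1] at hexp
    exact hexp
  have huM : (0:ℝ) ≤ ‖uM‖^2 := by positivity
  have hdiv : δ / (2*s) * (2*s) = δ := div_mul_cancel₀ δ (by positivity)
  have hpart1 : ‖wP‖^2 ≥ 1 - δ / (2*s) := by nlinarith
  refine ⟨hpart1, ?_⟩
  -- wP nonzero
  have hlt : δ / (2*s) < 1 := by
    rw [div_lt_one (by positivity)]; exact hδ1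
  have hwPsqpos : (0:ℝ) < ‖wP‖^2 := by nlinarith
  have hwPpos : (0:ℝ) < ‖wP‖ := by nlinarith [norm_nonneg wP]
  have hwPne : (‖wP‖ : ℂ) ≠ 0 := by
    simp only [ne_eq, Complex.ofReal_eq_zero]
    exact ne_of_gt hwPpos
  have hwle1 : ‖wP‖ ≤ 1 := by nlinarith [hnorm, sq_nonneg ‖wM‖, sq_nonneg ‖uP‖, huM]
  -- compute the distance
  have hDD : ‖Ψ - bellPhiPlus ⊗ₜ[ℂ] (((‖wP‖ : ℂ))⁻¹ • wP)‖^2 = 2 - 2 * ‖wP‖ := by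
    rw [← tinner_self]
    conv_lhs => rw [hdecomp]
    simp only [tinner_sub_left, tinner_sub_right, tinner_add_left, tinner_add_right,
      inner_tmul, inner_smul_left, inner_smul_right,
      ← tinner_eq, bPPPP, bPPPM, bPPSP, bPPSM, bPMPP, bPMPM, bPMSP, bPMSM,
      bSPPP, bSPPM, bSPSP, bSPSM, bSMPP, bSMPM, bSMSP, bSMSM,
      one_mul, zero_mul, add_zero, zero_add, mul_zero, sub_zero, zero_sub,
      map_inv₀, Complex.conj_ofReal]
    simp only [cinner_self']
    rw [show ((‖wP‖:ℂ))⁻¹ * (((‖wP‖:ℂ))⁻¹ * ((‖wP‖^2 : ℝ) : ℂ)) = 1 by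
          push_cast; field_simp,
        show ((‖wP‖:ℂ))⁻¹ * ((‖wP‖^2 : ℝ) : ℂ) = (‖wP‖:ℂ) by push_cast; field_simp]
    push_cast
    simp only [← Complex.ofReal_pow, Complex.sub_re, Complex.add_re, Complex.one_re,
      Complex.ofReal_re, Complex.mul_re, Complex.ofReal_im, Complex.one_im]
    nlinarith [hnorm]
  have hbound : ‖Ψ - bellPhiPlus ⊗ₜ[ℂ] (((‖wP‖ : ℂ))⁻¹ • wP)‖^2 ≤ δ / s := by
    rw [hDD]
    have h3 : 2 * (δ / (2*s)) = δ / s := by field_simp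
    nlinarith [hpart1]
  calc ‖Ψ - bellPhiPlus ⊗ₜ[ℂ] (((‖wP‖ : ℂ))⁻¹ • wP)‖
      = Real.sqrt (‖Ψ - bellPhiPlus ⊗ₜ[ℂ] (((‖wP‖ : ℂ))⁻¹ • wP)‖^2) :=
        (Real.sqrt_sq (norm_nonneg _)).symm
    _ ≤ Real.sqrt (δ / s) := Real.sqrt_le_sqrt hbound
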